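/- Let G1 and G2 be disjoint Eulerian multigraphs and let G be obtained from them by vertex-identification (identifying one vertex u1 of G1 with one vertex u2 of G2). Then the minimum cycle number satisfies c(G) = c(G1) + c(G2) and the maximum cycle number satisfies ν(G) = ν(G1) + ν(G2). -/

import Mathlib

open scoped Classical

/-- A finite multigraph without loops: a vertex type, an edge type, and an
incidence map assigning to each edge an unordered pair of distinct vertices. -/
structure MGraph where
  V : Type
  E : Type
  finV : Finite V
  finE : Finite E
  ends : E → Sym2 V
  noLoop : ∀ e, ¬ (ends e).IsDiag

namespace MGraph

variable (G : MGraph)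

/-- Degree of a vertex counting only edges in the edge set `F`. -/
noncomputable def degOn (F : Set G.E) (v : G.V) : ℕ := {e | e ∈ F ∧ v ∈ G.ends e}.ncard

/-- Degree of a vertex. -/
noncomputable def deg (v : G.V) : ℕ := G.degOn Set.univ v

/-- Adjacency using only edges from `F`. -/
def AdjOn (F : Set G.E) (a b : G.V) : Prop := ∃ e ∈ F, G.ends e = s(a, b)

/-- Reachability using only edges from `F`. -/
def ReachOn (F : Set G.E) : G.V → G.V → Prop := Relation.ReflTransGen (G.AdjOn F)

/-- Connectivity of a multigraph. -/
def Connected : Prop := Nonempty G.V ∧ ∀ a b : G.V, G.ReachOn Set.univ a b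

/-- A set of edges forms a cycle: it is nonempty, every vertex has degree 0 or 2
in it, and any two of its endpoints are joined by a path inside it. -/
def IsCycle (C : Set G.E) : Prop :=
  C.Nonempty ∧ (∀ v, G.degOn C v = 0 ∨ G.degOn C v = 2) ∧
    ∀ e ∈ C, ∀ f ∈ C, ∀ a b : G.V, a ∈ G.ends e → b ∈ G.ends f → G.ReachOn C a b

/-- A cycle decomposition of the edge set `F`: a set of cycles inside `F` such
that every edge of `F` lies in exactly one of them. -/
def IsCycleDecompOn (F : Set G.E) (D : Set (Set G.E)) : Prop :=
  (∀ C ∈ D, G.IsCycle C ∧ C ⊆ F) ∧ ∀ e ∈ F, ∃! C, C ∈ D ∧ e ∈ C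

/-- A cycle decomposition of the graph. -/
def IsCycleDecomp (D : Set (Set G.E)) : Prop := G.IsCycleDecompOn Set.univ D

/-- Minimum number of cycles in a cycle decomposition of `F`. -/
noncomputable def cOn (F : Set G.E) : ℕ :=
  sInf {n | ∃ D, G.IsCycleDecompOn F D ∧ D.ncard = n}

/-- Maximum number of cycles in a cycle decomposition of `F`. -/
noncomputable def nuOn (F : Set G.E) : ℕ :=
  sSup {n | ∃ D, G.IsCycleDecompOn F D ∧ D.ncard = n}

/-- Minimum cycle number. -/
noncomputable def c : ℕ := G.cOn Set.univ

/-- Maximum cycle number. -/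
noncomputable def nu : ℕ := G.nuOn Set.univ

/-- A multigraph is Eulerian if it admits a closed walk traversing every edge
exactly once. -/
def IsEulerian : Prop :=
  ∃ (vs : List G.V) (es : List G.E),
    vs.length = es.length + 1 ∧
    (∀ (i : ℕ) (e : G.E) (a b : G.V), es[i]? = some e → vs[i]? = some a →
      vs[i + 1]? = some b → G.ends e = s(a, b)) ∧
    vs.head? = vs.getLast? ∧ es.Nodup ∧ ∀ e : G.E, e ∈ es

/-- A cut-edge (bridge): its endpoints are disconnected after its removal. -/
def IsBridge (e : G.E) : Prop :=
  ∃ a b, G.ends e = s(a, b) ∧ ¬ G.ReachOn {e}ᶜ a b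

/-- 2-edge-connectivity: connected and without cut-edges. -/
def TwoEdgeConnected : Prop := G.Connected ∧ ∀ e, ¬ G.IsBridge e

/-- Reachability avoiding a vertex. -/
def ReachAvoid (v : G.V) (a b : G.V) : Prop :=
  Relation.ReflTransGen (fun x y => x ≠ v ∧ y ≠ v ∧ G.AdjOn Set.univ x y) a b

/-- A cut-vertex: two vertices in the same component get separated by its removal. -/
def IsCutVertex (v : G.V) : Prop :=
  ∃ a b, a ≠ v ∧ b ≠ v ∧ G.ReachOn Set.univ a b ∧ ¬ G.ReachAvoid v a b

/-- Biconnected: connected, at least two vertices, and without cut-vertices. -/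
def Biconnected : Prop :=
  G.Connected ∧ 2 ≤ Nat.card G.V ∧ ∀ v, ¬ G.IsCutVertex v

/-- The vertices covered by a set of edges. -/
def VertexSetOf (C : Set G.E) : Set G.V := {v | ∃ e ∈ C, v ∈ G.ends e}

/-- No two edge-disjoint cycles share more than two vertices. -/
def NoTwoCyclesShareThree : Prop :=
  ∀ C1 C2 : Set G.E, G.IsCycle C1 → G.IsCycle C2 → Disjoint C1 C2 →
    (G.VertexSetOf C1 ∩ G.VertexSetOf C2).ncard ≤ 2

/-- An Eulerian multiedge: two vertices joined by an even positive number of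
parallel edges. -/
def IsEulerianMultiedge : Prop :=
  Nat.card G.V = 2 ∧ 0 < Nat.card G.E ∧ Even (Nat.card G.E)

end MGraph

/-- Isomorphism of multigraphs. -/
structure MIso (G H : MGraph) where
  vEquiv : G.V ≃ H.V
  eEquiv : G.E ≃ H.E
  ends_eq : ∀ e, H.ends (eEquiv e) = (G.ends e).map vEquiv

namespace MGraph

/-- Vertex-identification: glue `u1 ∈ V(G1)` with `u2 ∈ V(G2)`. -/
noncomputable def vertexIdent (G1 G2 : MGraph) (u1 : G1.V) (u2 : G2.V) : MGraph where
  V := G1.V ⊕ {v : G2.V // v ≠ u2}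
  E := G1.E ⊕ G2.E
  finV := by have := G1.finV; have := G2.finV; infer_instance
  finE := by have := G1.finE; have := G2.finE; infer_instance
  ends := fun e =>
    match e with
    | Sum.inl e => (G1.ends e).map Sum.inl
    | Sum.inr e => (G2.ends e).map
        (fun v => if h : v = u2 then Sum.inl u1 else Sum.inr ⟨v, h⟩)
  noLoop := by
    rintro (e | e) h
    · exact G1.noLoop e ((Sym2.isDiag_map Sum.inl_injective).mp h)
    · refine G2.noLoop e ((Sym2.isDiag_map ?_).mp h)
      intro a b hab
      by_cases ha : a = u2 <;> by_cases hb : b = u2 <;>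
        simp [ha, hb] at hab ⊢ <;> simp_all

/-- Edge-identification: delete `e1` and `e2` (with endpoints `u1, v1` resp.
`u2, v2`) and add the new edges `u1u2` and `v1v2`. -/
def edgeIdent (G1 G2 : MGraph) (e1 : G1.E) (e2 : G2.E)
    (u1 v1 : G1.V) (u2 v2 : G2.V) : MGraph where
  V := G1.V ⊕ G2.V
  E := {e : G1.E // e ≠ e1} ⊕ {e : G2.E // e ≠ e2} ⊕ Bool
  finV := by have := G1.finV; have := G2.finV; infer_instance
  finE := by have := G1.finE; have := G2.finE; infer_instance
  ends := fun e =>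
    match e with
    | Sum.inl e => (G1.ends e.1).map Sum.inl
    | Sum.inr (Sum.inl e) => (G2.ends e.1).map Sum.inr
    | Sum.inr (Sum.inr true) => s(Sum.inl u1, Sum.inr u2)
    | Sum.inr (Sum.inr false) => s(Sum.inl v1, Sum.inr v2)
  noLoop := by
    rintro (e | e | b) h
    · exact G1.noLoop e.1 ((Sym2.isDiag_map Sum.inl_injective).mp h)
    · exact G2.noLoop e.1 ((Sym2.isDiag_map Sum.inr_injective).mp h)
    · cases b <;> simp [Sym2.mk_isDiag_iff] at h

/-- Vertex-edge-identification: identify `v1` with `v2`, delete `e1 = u1v1`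
and `e2 = u2v2`, and add a new edge `u1u2`. -/
noncomputable def vertexEdgeIdent (G1 G2 : MGraph) (e1 : G1.E) (e2 : G2.E)
    (u1 v1 : G1.V) (u2 v2 : G2.V) (h2 : G2.ends e2 = s(u2, v2)) : MGraph where
  V := G1.V ⊕ {w : G2.V // w ≠ v2}
  E := {e : G1.E // e ≠ e1} ⊕ {e : G2.E // e ≠ e2} ⊕ Unit
  finV := by have := G1.finV; have := G2.finV; infer_instance
  finE := by have := G1.finE; have := G2.finE; infer_instance
  ends := fun e =>
    match e with
    | Sum.inl e => (G1.ends e.1).map Sum.inl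
    | Sum.inr (Sum.inl e) => (G2.ends e.1).map
        (fun w => if h : w = v2 then Sum.inl v1 else Sum.inr ⟨w, h⟩)
    | Sum.inr (Sum.inr _) =>
        s(Sum.inl u1, Sum.inr ⟨u2, fun h =>
          G2.noLoop e2 (by rw [h2, h]; exact Sym2.mk_isDiag_iff.mpr rfl)⟩)
  noLoop := by
    rintro (e | e | u) h
    · exact G1.noLoop e.1 ((Sym2.isDiag_map Sum.inl_injective).mp h)
    · refine G2.noLoop e.1 ((Sym2.isDiag_map ?_).mp h)
      intro a b hab
      by_cases ha : a = v2 <;> by_cases hb : b = v2 <;>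
        simp [ha, hb] at hab ⊢ <;> simp_all
    · simp [Sym2.mk_isDiag_iff] at h

/-- Delete an edge from a multigraph. -/
def deleteEdge (G : MGraph) (e : G.E) : MGraph where
  V := G.V
  E := {f : G.E // f ≠ e}
  finV := G.finV
  finE := by have := G.finE; infer_instance
  ends := fun f => G.ends f.1
  noLoop := fun f => G.noLoop f.1

/-- `Sym2.pmap`-style map into a subtype. -/
noncomputable def sym2Pmap {α β : Type} {p : α → Prop} (f : ∀ a, p a → β)
    (s : Sym2 α) (h : ∀ a ∈ s, p a) : Sym2 β :=
  let z := Classical.choose (Quot.exists_rep s)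
  s(f z.1 (h z.1 (by
      have hz : Quot.mk _ z = s := Classical.choose_spec (Quot.exists_rep s)
      rw [← hz]; exact Sym2.mem_mk_left z.1 z.2)),
    f z.2 (h z.2 (by
      have hz : Quot.mk _ z = s := Classical.choose_spec (Quot.exists_rep s)
      rw [← hz]; exact Sym2.mem_mk_right z.1 z.2)))

/-- Delete a vertex (and all incident edges) from a multigraph. -/
noncomputable def deleteVertex (G : MGraph) (v : G.V) : MGraph where
  V := {w : G.V // w ≠ v}
  E := {e : G.E // v ∉ G.ends e}
  finV := by have := G.finV; infer_instance
  finE := by have := G.finE; infer_instance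
  ends := fun e => sym2Pmap (fun a ha => (⟨a, ha⟩ : {w : G.V // w ≠ v}))
    (G.ends e.1) (fun a ha hav => e.2 (hav ▸ ha))
  noLoop := by
    rintro ⟨e, he⟩ h
    apply G.noLoop e
    unfold sym2Pmap at h
    have hz : Quot.mk _ (Classical.choose (Quot.exists_rep (G.ends e))) = G.ends e :=
      Classical.choose_spec (Quot.exists_rep (G.ends e))
    rw [Sym2.mk_isDiag_iff] at h
    have : (Classical.choose (Quot.exists_rep (G.ends e))).1 =
        (Classical.choose (Quot.exists_rep (G.ends e))).2 := congrArg Subtype.val h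
    rw [← hz]
    have h' := Sym2.mk_isDiag_iff.mpr this
    exact h'

end MGraph

/-- A tree decomposition of a multigraph: a tree of bags covering all vertices
and edges such that the bags containing a given vertex form a subtree. -/
structure TreeDecomp (G : MGraph) where
  ι : Type
  t : SimpleGraph ι
  isTree : t.IsTree
  bag : ι → Set G.V
  covers_vertex : ∀ v : G.V, ∃ i, v ∈ bag i
  covers_edge : ∀ e : G.E, ∃ i, ∀ v ∈ G.ends e, v ∈ bag i
  bags_connected : ∀ v : G.V, (SimpleGraph.induce {i | v ∈ bag i} t).Connected

namespace MGraph

/-- The graph has treewidth at most `k`. -/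
def twLE (G : MGraph) (k : ℕ) : Prop :=
  ∃ T : TreeDecomp G, ∀ i, (T.bag i).ncard ≤ k + 1

/-- Treewidth of a multigraph. -/
noncomputable def treewidth (G : MGraph) : ℕ := sInf {k | G.twLE k}

/-- The closed necklace on `n ≥ 2` vertices: a cycle of length `n` with all
of its edges doubled. -/
def necklace (n : ℕ) (hn : 2 ≤ n) : MGraph where
  V := ZMod n
  E := ZMod n × Bool
  finV := by have : NeZero n := ⟨by omega⟩; infer_instance
  finE := by have : NeZero n := ⟨by omega⟩; infer_instance
  ends := fun e => s(e.1, e.1 + 1)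
  noLoop := by
    have : Fact (1 < n) := ⟨hn⟩
    intro e h
    rw [Sym2.mk_isDiag_iff] at h
    exact one_ne_zero (left_eq_add.mp h)

end MGraph

namespace MGraph

lemma sym2_exists_rep {α : Type} (z : Sym2 α) : ∃ a b, z = s(a, b) :=
  Sym2.inductionOn z (fun a b => ⟨a, b, rfl⟩)

lemma degOn_def (G : MGraph) (F : Set G.E) (v : G.V) :
    G.degOn F v = {e | e ∈ F ∧ v ∈ G.ends e}.ncard := rfl

lemma ends_exists (G : MGraph) (e : G.E) : ∃ a b, G.ends e = s(a, b) ∧ a ≠ b := by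
  obtain ⟨a, b, hab⟩ := sym2_exists_rep (G.ends e)
  exact ⟨a, b, hab, fun h => G.noLoop e (by rw [hab]; exact Sym2.mk_isDiag_iff.mpr h)⟩

lemma reachOn_symm (G : MGraph) (F : Set G.E) : Symmetric (G.ReachOn F) :=
  by
    haveI : Std.Symm (G.AdjOn F) := ⟨fun _ _ ⟨x, hx, hxe⟩ => ⟨x, hx, by rw [hxe, Sym2.eq_swap]⟩⟩
    exact fun a b h => Std.Symm.symm (r := Relation.ReflTransGen (G.AdjOn F)) a b h

lemma even_degOn (G : MGraph) (C : Set G.E) (u : G.V)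
    (h : ∀ v, v ≠ u → Even (G.degOn C v)) : Even (G.degOn C u) := by
  haveI := G.finV; haveI := G.finE
  haveI : Fintype G.V := Fintype.ofFinite G.V
  haveI : Fintype G.E := Fintype.ofFinite G.E
  have hdeg : ∀ v : G.V, G.degOn C v =
      ∑ e : G.E, (if e ∈ C ∧ v ∈ G.ends e then 1 else 0) := by
    intro v
    have hs : {e | e ∈ C ∧ v ∈ G.ends e} =
        ↑(Finset.univ.filter (fun e : G.E => e ∈ C ∧ v ∈ G.ends e)) := by
      ext x; simp
    rw [degOn_def, hs, Set.ncard_coe_finset, Finset.card_filter]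
  have hsum : ∑ v : G.V, G.degOn C v = 2 * C.ncard := by
    calc ∑ v : G.V, G.degOn C v
        = ∑ v : G.V, ∑ e : G.E, (if e ∈ C ∧ v ∈ G.ends e then 1 else 0) := by
          simp only [hdeg]
      _ = ∑ e : G.E, ∑ v : G.V, (if e ∈ C ∧ v ∈ G.ends e then 1 else 0) := Finset.sum_comm
      _ = ∑ e : G.E, (if e ∈ C then 2 else 0) := by
          refine Finset.sum_congr rfl (fun e _ => ?_)
          by_cases he : e ∈ C
          · simp only [he, true_and, if_true]
            obtain ⟨a, b, hab, hne⟩ := G.ends_exists e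
            have hiff : ∀ v : G.V, v ∈ G.ends e ↔ v ∈ ({a, b} : Finset G.V) := by
              intro v; rw [hab]; simp [Sym2.mem_iff]
            calc (∑ v : G.V, if v ∈ G.ends e then 1 else 0)
                = ∑ v : G.V, if v ∈ ({a, b} : Finset G.V) then 1 else 0 := by
                  simp only [hiff]
              _ = ({a, b} : Finset G.V).card := (Finset.card_filter _ _).symm.trans
                  (by congr 1; ext v; simp)
              _ = 2 := Finset.card_pair hne
          · simp [he]
      _ = 2 * C.ncard := by
          have hs : C = ↑(Finset.univ.filter (· ∈ C)) := by ext x; simp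
          rw [hs, Set.ncard_coe_finset, Finset.card_filter, Finset.mul_sum]
          refine Finset.sum_congr rfl (fun e _ => ?_)
          by_cases he : e ∈ C <;> simp [he]
  have h2 : Even (∑ v : G.V, G.degOn C v) := by rw [hsum]; exact even_two_mul _
  rw [← Finset.add_sum_erase _ _ (Finset.mem_univ u)] at h2
  have h3 : Even (∑ v ∈ Finset.univ.erase u, G.degOn C v) :=
    Finset.even_sum _ (fun v hv => h v (Finset.ne_of_mem_erase hv))
  rcases h3 with ⟨k, hk⟩
  rcases h2 with ⟨m, hm⟩
  exact ⟨m - k, by omega⟩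

end MGraph
namespace MGraph

lemma closed_walk_decomp (G : MGraph) :
    ∀ n : ℕ, ∀ (v : ℕ → G.V) (e : ℕ → G.E),
    (∀ i < n, G.ends (e i) = s(v i, v (i+1))) →
    v 0 = v n →
    (∀ i < n, ∀ j < n, e i = e j → i = j) →
    ∃ D, G.IsCycleDecompOn {x | ∃ i < n, x = e i} D := by
  intro n
  induction n using Nat.strong_induction_on with
  | _ n IH =>
  intro v e hve hcl hinj
  rcases Nat.eq_zero_or_pos n with rfl | hn
  · refine ⟨∅, fun C hC => absurd hC (Set.notMem_empty C), ?_⟩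
    rintro x ⟨i, hi, _⟩; omega
  -- minimal gap between repeated vertices
  have hPn : ∃ d, 0 < d ∧ ∃ i, i + d ≤ n ∧ v i = v (i + d) :=
    ⟨n, hn, 0, by omega, by simpa using hcl⟩
  classical
  set d := Nat.find hPn with hd
  obtain ⟨hdpos, i, hijn, hvij⟩ := Nat.find_spec hPn
  have hmin : ∀ d' < d, ¬ (0 < d' ∧ ∃ i, i + d' ≤ n ∧ v i = v (i + d')) :=
    fun d' hd' => Nat.find_min hPn hd'
  set j := i + d with hj
  have hjn : j ≤ n := hijn
  have hvj : v j = v i := hvij.symm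
  have huniq : ∀ k, i ≤ k → k < j → ∀ l, i ≤ l → l < j → v k = v l → k = l := by
    intro k hik hkj l hil hlj hkl
    by_contra hne
    rcases Nat.lt_or_ge k l with hlt | hge
    · exact hmin (l - k) (by omega) ⟨by omega, k, by omega,
        by rw [show k + (l - k) = l by omega]; exact hkl⟩
    · have hlt : l < k := by omega
      exact hmin (k - l) (by omega) ⟨by omega, l, by omega,
        by rw [show l + (k - l) = k by omega]; exact hkl.symm⟩
  have htwo : i + 2 ≤ j := by
    rcases Nat.lt_or_ge (i + 1) j with h1 | h1
    · omega
    · exfalso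
      have h12 : i + 1 = j := by omega
      have hv2 := hvij
      rw [← h12] at hv2
      apply G.noLoop (e i)
      rw [hve i (by omega), ← hv2]
      exact Sym2.mk_isDiag_iff.mpr rfl
  set C : Set G.E := {x | ∃ k, i ≤ k ∧ k < j ∧ x = e k} with hC
  have hCcyc : G.IsCycle C := by
    refine ⟨⟨e i, i, le_refl i, by omega, rfl⟩, ?_, ?_⟩
    · -- degrees
      intro w
      by_cases hw : ∃ m, i ≤ m ∧ m < j ∧ w = v m
      · obtain ⟨m, him, hmj, rfl⟩ := hw
        right
        rcases Nat.eq_or_lt_of_le him with hmi | hmi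
        · -- base vertex : edges e i and e (j-1)
          have hset : {x | x ∈ C ∧ v m ∈ G.ends x} = {e i, e (j-1)} := by
            ext x
            simp only [Set.mem_setOf_eq, Set.mem_insert_iff, Set.mem_singleton_iff]
            constructor
            · rintro ⟨⟨k, hik, hkj, rfl⟩, hmem⟩
              rw [hve k (by omega)] at hmem
              rcases Sym2.mem_iff.mp hmem with h | h
              · left
                have hmk : m = k := huniq m him hmj k hik hkj h
                rw [← hmk, ← hmi]
              · rcases Nat.lt_or_ge (k+1) j with h2 | h2
                · have : m = k + 1 := huniq m him hmj (k+1) (by omega) h2 h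
                  omega
                · right
                  have hk1 : k = j - 1 := by omega
                  rw [hk1]
            · rintro (rfl | rfl)
              · exact ⟨⟨i, le_refl i, by omega, rfl⟩, by
                  rw [hve i (by omega), ← hmi]; exact Sym2.mem_mk_left _ _⟩
              · refine ⟨⟨j-1, by omega, by omega, rfl⟩, ?_⟩
                rw [hve (j-1) (by omega), show j - 1 + 1 = j by omega, hvj, ← hmi]
                exact Sym2.mem_mk_right _ _
          rw [degOn_def, hset]
          exact Set.ncard_pair (fun hEq => by
            have := hinj i (by omega) (j-1) (by omega) hEq; omega)
        · -- interior vertex : edges e (m-1) and e m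
          have hset : {x | x ∈ C ∧ v m ∈ G.ends x} = {e (m-1), e m} := by
            ext x
            simp only [Set.mem_setOf_eq, Set.mem_insert_iff, Set.mem_singleton_iff]
            constructor
            · rintro ⟨⟨k, hik, hkj, rfl⟩, hmem⟩
              rw [hve k (by omega)] at hmem
              rcases Sym2.mem_iff.mp hmem with h | h
              · right
                have hmk : m = k := huniq m him hmj k hik hkj h
                rw [hmk]
              · rcases Nat.lt_or_ge (k+1) j with h2 | h2
                · have hmk : m = k + 1 := huniq m him hmj (k+1) (by omega) h2 h
                  left
                  congr 1
                  omega
                · exfalso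
                  rw [show k + 1 = j by omega, hvj] at h
                  have : m = i := huniq m him hmj i (le_refl i) (by omega) h
                  omega
            · rintro (rfl | rfl)
              · refine ⟨⟨m-1, by omega, by omega, rfl⟩, ?_⟩
                rw [hve (m-1) (by omega), show m - 1 + 1 = m by omega]
                exact Sym2.mem_mk_right _ _
              · exact ⟨⟨m, him, hmj, rfl⟩, by
                  rw [hve m (by omega)]; exact Sym2.mem_mk_left _ _⟩
          rw [degOn_def, hset]
          exact Set.ncard_pair (fun hEq => by
            have := hinj (m-1) (by omega) m (by omega) hEq; omega)
      · -- uncovered vertex : degree 0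
        left
        have hset : {x | x ∈ C ∧ w ∈ G.ends x} = ∅ := by
          ext x
          simp only [Set.mem_setOf_eq, Set.mem_empty_iff_false, iff_false, not_and]
          rintro ⟨k, hik, hkj, rfl⟩ hmem
          rw [hve k (by omega)] at hmem
          rcases Sym2.mem_iff.mp hmem with h | h
          · exact hw ⟨k, hik, hkj, h⟩
          · rcases Nat.lt_or_ge (k+1) j with h2 | h2
            · exact hw ⟨k+1, by omega, h2, h⟩
            · rw [show k + 1 = j by omega, hvj] at h
              exact hw ⟨i, le_refl i, by omega, h⟩
        rw [degOn_def, hset, Set.ncard_empty]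
    · -- connectivity
      have hreach : ∀ m, i ≤ m → m ≤ j → G.ReachOn C (v i) (v m) := by
        intro m him
        induction m, him using Nat.le_induction with
        | base => exact fun _ => Relation.ReflTransGen.refl
        | succ m hm IH2 =>
          intro hmj
          exact (IH2 (by omega)).tail
            ⟨e m, ⟨m, hm, by omega, rfl⟩, hve m (by omega)⟩
      have hmemC : ∀ a : G.V, ∀ x ∈ C, a ∈ G.ends x → ∃ m, i ≤ m ∧ m ≤ j ∧ a = v m := by
        rintro a x ⟨k, hik, hkj, rfl⟩ ha
        rw [hve k (by omega)] at ha
        rcases Sym2.mem_iff.mp ha with h | h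
        · exact ⟨k, hik, by omega, h⟩
        · exact ⟨k+1, by omega, by omega, h⟩
      intro x hx y hy a b ha hb
      obtain ⟨ma, hima, hmaj, rfl⟩ := hmemC a x hx ha
      obtain ⟨mb, himb, hmbj, rfl⟩ := hmemC b y hy hb
      exact (G.reachOn_symm C (hreach ma hima hmaj)).trans (hreach mb himb hmbj)
  -- splice out the cycle and recurse
  set n' := n - d with hn'
  set v' : ℕ → G.V := fun k => if k ≤ i then v k else v (k + d) with hv'
  set e' : ℕ → G.E := fun k => if k < i then e k else e (k + d) with he'
  have hin' : i ≤ n' := by omega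
  have hve' : ∀ k < n', G.ends (e' k) = s(v' k, v' (k+1)) := by
    intro k hk
    rcases Nat.lt_or_ge k i with hki | hki
    · have h1 : e' k = e k := if_pos hki
      have h2 : v' k = v k := if_pos (by omega)
      have h3 : v' (k+1) = v (k+1) := if_pos (by omega)
      rw [h1, h2, h3]; exact hve k (by omega)
    · have h1 : e' k = e (k + d) := if_neg (by omega)
      have h3 : v' (k+1) = v (k+1+d) := if_neg (by omega)
      have h2 : v' k = v (k + d) := by
        rcases Nat.eq_or_lt_of_le hki with h | h
        · have hvk : v' k = v k := if_pos (by omega)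
          rw [hvk, ← h, ← hj]
          exact hvij
        · exact if_neg (by omega)
      rw [h1, h2, h3, show k + 1 + d = k + d + 1 by omega]
      exact hve (k + d) (by omega)
  have hcl' : v' 0 = v' n' := by
    rcases Nat.eq_or_lt_of_le hin' with h | h
    · have h1 : v' 0 = v 0 := if_pos (by omega)
      have h2 : v' n' = v n' := if_pos (by omega)
      have hji : j = n := by omega
      rw [h1, h2, ← h, hcl, ← hji]
      exact hvj
    · have h1 : v' 0 = v 0 := if_pos (by omega)
      have h2 : v' n' = v (n' + d) := if_neg (by omega)
      rw [h1, h2, show n' + d = n by omega]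
      exact hcl
  have he'spec : ∀ m, m < n' → ∃ m2, m2 < n ∧ e' m = e m2 ∧
      ((m < i ∧ m2 = m) ∨ (i ≤ m ∧ m2 = m + d)) := by
    intro m hm
    rcases Nat.lt_or_ge m i with h | h
    · exact ⟨m, by omega, if_pos h, Or.inl ⟨h, rfl⟩⟩
    · exact ⟨m + d, by omega, if_neg (by omega), Or.inr ⟨h, rfl⟩⟩
  have hinj' : ∀ k < n', ∀ l < n', e' k = e' l → k = l := by
    intro k hk l hl hEq
    obtain ⟨k2, hk2, hek, hko⟩ := he'spec k hk
    obtain ⟨l2, hl2, hel, hlo⟩ := he'spec l hl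
    have := hinj k2 hk2 l2 hl2 (by rw [← hek, ← hel, hEq])
    omega
  obtain ⟨D', hD'⟩ := IH n' (by omega) v' e' hve' hcl' hinj'
  have hF' : {x | ∃ k < n', x = e' k} = {x | ∃ i' < n, x = e i'} \ C := by
    ext x
    constructor
    · rintro ⟨k, hk, rfl⟩
      obtain ⟨k2, hk2, hek, hko⟩ := he'spec k hk
      rw [hek]
      refine ⟨⟨k2, hk2, rfl⟩, ?_⟩
      rintro ⟨m, him, hmj, hEq⟩
      have := hinj k2 hk2 m (by omega) hEq
      omega
    · rintro ⟨⟨m, hm, rfl⟩, hnc⟩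
      have hm2 : ¬ (i ≤ m ∧ m < j) := fun ⟨ha, hb⟩ => hnc ⟨m, ha, hb, rfl⟩
      rcases Nat.lt_or_ge m i with hmi | hmi
      · exact ⟨m, by omega, (if_pos hmi).symm⟩
      · have hmj : j ≤ m := by omega
        refine ⟨m - d, by omega, ?_⟩
        rw [show (e' (m - d) : G.E) = e (m - d + d) from if_neg (by omega),
          show m - d + d = m by omega]
  rw [hF'] at hD'
  refine ⟨insert C D', ?_, ?_⟩
  · rintro C'' (rfl | hC'')
    · exact ⟨hCcyc, by rintro x ⟨k, hik, hkj, rfl⟩; exact ⟨k, by omega, rfl⟩⟩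
    · obtain ⟨h1, h2⟩ := hD'.1 C'' hC''
      exact ⟨h1, h2.trans Set.diff_subset⟩
  · intro x hx
    by_cases hxC : x ∈ C
    · refine ⟨C, ⟨Set.mem_insert _ _, hxC⟩, ?_⟩
      rintro C'' ⟨(rfl | hC''), hxC''⟩
      · rfl
      · exact absurd ((hD'.1 C'' hC'').2 hxC'').2 (not_not.mpr hxC)
    · obtain ⟨C'', ⟨hC''D, hxC''⟩, huni⟩ := hD'.2 x ⟨hx, hxC⟩
      refine ⟨C'', ⟨Set.mem_insert_of_mem _ hC''D, hxC''⟩, ?_⟩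
      rintro C3 ⟨(rfl | hC3), hxC3⟩
      · exact absurd hxC3 hxC
      · exact huni C3 ⟨hC3, hxC3⟩

end MGraph
namespace MGraph

lemma euler_decomp (G : MGraph) (h : G.IsEulerian) : ∃ D, G.IsCycleDecomp D := by
  obtain ⟨vs, es, hlen, hcompat, hclosed, hnodup, hall⟩ := h
  classical
  by_cases hE : IsEmpty G.E
  · refine ⟨∅, fun C hC => absurd hC (Set.notMem_empty C), fun x _ => (hE.false x).elim⟩
  rw [not_isEmpty_iff] at hE
  have hesne : es ≠ [] := by
    intro h0
    obtain ⟨x⟩ := hE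
    have := hall x
    rw [h0] at this
    exact absurd this (List.not_mem_nil (a := x))
  have hvsne : vs ≠ [] := by
    intro h0
    rw [h0] at hlen
    simp at hlen
  haveI : Inhabited G.E := ⟨es.head hesne⟩
  haveI : Inhabited G.V := ⟨vs.head hvsne⟩
  set n := es.length with hn
  set v : ℕ → G.V := fun i => vs.getD i default with hv
  set e : ℕ → G.E := fun i => es.getD i default with he
  have hvi : ∀ i, i < n + 1 → vs[i]? = some (v i) := by
    intro i hi
    have hi' : i < vs.length := by omega
    have hg : v i = vs[i] := List.getD_eq_getElem vs default hi'
    rw [hg, List.getElem?_eq_getElem hi']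
  have hei : ∀ i, i < n → es[i]? = some (e i) := by
    intro i hi
    have hi' : i < es.length := by omega
    have hg : e i = es[i] := List.getD_eq_getElem es default hi'
    rw [hg, List.getElem?_eq_getElem hi']
  have hve : ∀ i < n, G.ends (e i) = s(v i, v (i+1)) := by
    intro i hi
    exact hcompat i (e i) (v i) (v (i+1)) (hei i hi) (hvi i (by omega)) (hvi (i+1) (by omega))
  have hcl : v 0 = v n := by
    have h1 : vs.head? = some (v 0) := by
      rw [List.head?_eq_getElem?]
      exact hvi 0 (by omega)
    have h2 : vs.getLast? = some (v n) := by
      rw [List.getLast?_eq_getElem?]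
      have : vs.length - 1 = n := by omega
      rw [this]
      exact hvi n (by omega)
    rw [h1, h2] at hclosed
    exact Option.some_injective _ hclosed
  have hinj : ∀ i < n, ∀ j < n, e i = e j → i = j := by
    intro i hi j hj hEq
    have hi' : i < es.length := by omega
    have hj' : j < es.length := by omega
    have h1 : es[i] = e i := (List.getD_eq_getElem es default hi').symm
    have h2 : es[j] = e j := (List.getD_eq_getElem es default hj').symm
    exact (List.Nodup.getElem_inj_iff hnodup).mp (by rw [h1, h2, hEq])
  obtain ⟨D, hD⟩ := G.closed_walk_decomp n v e hve hcl hinj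
  have huniv : {x | ∃ i < n, x = e i} = Set.univ := by
    ext x
    simp only [Set.mem_setOf_eq, Set.mem_univ, iff_true]
    obtain ⟨i, hi, hx⟩ := List.mem_iff_getElem.mp (hall x)
    refine ⟨i, by omega, ?_⟩
    rw [← hx]
    exact (List.getD_eq_getElem es default hi).symm
  rw [huniv] at hD
  exact ⟨D, hD⟩

end MGraph
namespace MGraph

lemma degOn_empty (G : MGraph) (v : G.V) : G.degOn ∅ v = 0 := by
  rw [degOn_def]
  simp

section VI

variable (G1 G2 : MGraph) (u1 : G1.V) (u2 : G2.V)

/-- Embedding of `G2.V` into the vertex-identification. -/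
noncomputable def iota2 : G2.V → (MGraph.vertexIdent G1 G2 u1 u2).V :=
  fun v => if h : v = u2 then Sum.inl u1 else Sum.inr ⟨v, h⟩

variable {G1 G2 u1 u2}

lemma vi_ends_inl (e : G1.E) :
    (MGraph.vertexIdent G1 G2 u1 u2).ends (Sum.inl e) = (G1.ends e).map Sum.inl := rfl

lemma vi_ends_inr (e : G2.E) :
    (MGraph.vertexIdent G1 G2 u1 u2).ends (Sum.inr e) = (G2.ends e).map (iota2 G1 G2 u1 u2) := rfl

lemma iota2_injective : Function.Injective (iota2 G1 G2 u1 u2) := by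
  intro a b hab
  unfold iota2 at hab
  by_cases ha : a = u2 <;> by_cases hb : b = u2
  · rw [ha, hb]
  · erw [dif_pos ha, dif_neg hb] at hab; exact absurd hab (by simp)
  · erw [dif_neg ha, dif_pos hb] at hab; exact absurd hab (by simp)
  · erw [dif_neg ha, dif_neg hb] at hab
    exact congrArg Subtype.val (Sum.inr_injective hab)

lemma iota2_eq_inl {v : G2.V} {w : G1.V} :
    iota2 G1 G2 u1 u2 v = Sum.inl w ↔ (v = u2 ∧ w = u1) := by
  unfold iota2
  by_cases hv : v = u2
  · erw [dif_pos hv]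
    simp [hv]
    exact ⟨fun h => (Sum.inl_injective h).symm, fun h => by rw [h]⟩
  · erw [dif_neg hv]
    simp [hv]

lemma iota2_u2 : iota2 G1 G2 u1 u2 u2 = Sum.inl u1 := by unfold iota2; simp; rfl

lemma degOn_vi_add (C : Set (MGraph.vertexIdent G1 G2 u1 u2).E)
    (p : (MGraph.vertexIdent G1 G2 u1 u2).V) (P1 : G1.E → Prop) (P2 : G2.E → Prop)
    (h1 : ∀ e, p ∈ (MGraph.vertexIdent G1 G2 u1 u2).ends (Sum.inl e) ↔ P1 e)
    (h2 : ∀ e, p ∈ (MGraph.vertexIdent G1 G2 u1 u2).ends (Sum.inr e) ↔ P2 e) :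
    (MGraph.vertexIdent G1 G2 u1 u2).degOn C p =
      {e | e ∈ Sum.inl ⁻¹' C ∧ P1 e}.ncard + {e | e ∈ Sum.inr ⁻¹' C ∧ P2 e}.ncard := by
  haveI := G1.finE; haveI := G2.finE
  haveI := (MGraph.vertexIdent G1 G2 u1 u2).finE
  rw [degOn_def]
  have hsplit : {x | x ∈ C ∧ p ∈ (MGraph.vertexIdent G1 G2 u1 u2).ends x} =
      Sum.inl '' {e | e ∈ Sum.inl ⁻¹' C ∧ P1 e} ∪ Sum.inr '' {e | e ∈ Sum.inr ⁻¹' C ∧ P2 e} := by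
    ext x
    cases x with
    | inl e =>
      constructor
      · rintro ⟨hc, hp⟩; exact Or.inl ⟨e, ⟨hc, (h1 e).mp hp⟩, rfl⟩
      · rintro (⟨x, hx, hxe⟩ | ⟨x, _, hxe⟩)
        · cases Sum.inl_injective hxe; exact ⟨hx.1, (h1 _).mpr hx.2⟩
        · exact nomatch hxe
    | inr e =>
      constructor
      · rintro ⟨hc, hp⟩; exact Or.inr ⟨e, ⟨hc, (h2 e).mp hp⟩, rfl⟩
      · rintro (⟨x, _, hxe⟩ | ⟨x, hx, hxe⟩)
        · exact nomatch hxe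
        · cases Sum.inr_injective hxe; exact ⟨hx.1, (h2 _).mpr hx.2⟩
  erw [hsplit, Set.ncard_union_eq ?dis (Set.toFinite _) (Set.toFinite _),
    Set.ncard_image_of_injective _ Sum.inl_injective,
    Set.ncard_image_of_injective _ Sum.inr_injective]
  case dis =>
    erw [Set.disjoint_left]
    rintro x ⟨a, _, rfl⟩ ⟨b, _, hb⟩
    exact nomatch hb

lemma degOn_vi_inl (C : Set (MGraph.vertexIdent G1 G2 u1 u2).E) {v : G1.V} (hv : v ≠ u1) :
    (MGraph.vertexIdent G1 G2 u1 u2).degOn C (Sum.inl v) = G1.degOn (Sum.inl ⁻¹' C) v := by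
  rw [degOn_vi_add C (Sum.inl v) (fun e => v ∈ G1.ends e) (fun _ => False)]
  · rw [show {e : G2.E | e ∈ Sum.inr ⁻¹' C ∧ False} = ∅ by simp, Set.ncard_empty, add_zero,
      degOn_def]
  · intro e
    rw [vi_ends_inl]
    constructor
    · rintro hmem
      obtain ⟨a, ha, hav⟩ := Sym2.mem_map.mp hmem
      exact Sum.inl_injective hav ▸ ha
    · exact fun h => Sym2.mem_map.mpr ⟨v, h, rfl⟩
  · intro e
    rw [vi_ends_inr]
    simp only [iff_false]
    intro hmem
    obtain ⟨a, _, hav⟩ := Sym2.mem_map.mp hmem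
    exact hv (iota2_eq_inl.mp hav).2

lemma degOn_vi_inr (C : Set (MGraph.vertexIdent G1 G2 u1 u2).E) {w : G2.V} (hw : w ≠ u2) :
    (MGraph.vertexIdent G1 G2 u1 u2).degOn C (Sum.inr ⟨w, hw⟩) =
      G2.degOn (Sum.inr ⁻¹' C) w := by
  rw [degOn_vi_add C (Sum.inr ⟨w, hw⟩) (fun _ => False) (fun e => w ∈ G2.ends e)]
  · rw [show {e : G1.E | e ∈ Sum.inl ⁻¹' C ∧ False} = ∅ by simp, Set.ncard_empty, zero_add,
      degOn_def]
  · intro e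
    rw [vi_ends_inl]
    simp only [iff_false]
    intro hmem
    obtain ⟨a, _, hav⟩ := Sym2.mem_map.mp hmem
    exact nomatch hav
  · intro e
    rw [vi_ends_inr]
    constructor
    · rintro hmem
      obtain ⟨a, ha, hav⟩ := Sym2.mem_map.mp hmem
      have haw : a = w := by
        unfold iota2 at hav
        by_cases hau : a = u2
        · erw [dif_pos hau] at hav
          exact nomatch hav
        · erw [dif_neg hau] at hav
          exact congrArg Subtype.val (Sum.inr_injective hav)
      exact haw ▸ ha
    · intro h
      exact Sym2.mem_map.mpr ⟨w, h, by unfold iota2; simp [hw]; rfl⟩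

lemma degOn_vi_glue (C : Set (MGraph.vertexIdent G1 G2 u1 u2).E) :
    (MGraph.vertexIdent G1 G2 u1 u2).degOn C (Sum.inl u1) =
      G1.degOn (Sum.inl ⁻¹' C) u1 + G2.degOn (Sum.inr ⁻¹' C) u2 := by
  rw [degOn_vi_add C (Sum.inl u1) (fun e => u1 ∈ G1.ends e) (fun e => u2 ∈ G2.ends e)]
  · rw [degOn_def, degOn_def]
  · intro e
    rw [vi_ends_inl]
    constructor
    · rintro hmem
      obtain ⟨a, ha, hav⟩ := Sym2.mem_map.mp hmem
      exact Sum.inl_injective hav ▸ ha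
    · exact fun h => Sym2.mem_map.mpr ⟨u1, h, rfl⟩
  · intro e
    rw [vi_ends_inr]
    constructor
    · rintro hmem
      obtain ⟨a, ha, hav⟩ := Sym2.mem_map.mp hmem
      exact (iota2_eq_inl.mp hav).1 ▸ ha
    · exact fun h => Sym2.mem_map.mpr ⟨u2, h, iota2_u2⟩

end VI

end MGraph
namespace MGraph

section VI2

variable {G1 G2 : MGraph} {u1 : G1.V} {u2 : G2.V}

lemma reach_lift1 {C1 : Set G1.E} {a b : G1.V} (h : G1.ReachOn C1 a b) :
    (MGraph.vertexIdent G1 G2 u1 u2).ReachOn (Sum.inl '' C1) (Sum.inl a) (Sum.inl b) := by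
  refine Relation.ReflTransGen.lift Sum.inl ?_ _ _ h
  rintro x y ⟨e, he, hends⟩
  exact ⟨Sum.inl e, Set.mem_image_of_mem _ he, by
    rw [vi_ends_inl, hends]; exact Sym2.map_pair_eq _ _ _⟩

lemma reach_lift2 {C2 : Set G2.E} {a b : G2.V} (h : G2.ReachOn C2 a b) :
    (MGraph.vertexIdent G1 G2 u1 u2).ReachOn (Sum.inr '' C2)
      (iota2 G1 G2 u1 u2 a) (iota2 G1 G2 u1 u2 b) := by
  refine Relation.ReflTransGen.lift (iota2 G1 G2 u1 u2) ?_ _ _ h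
  rintro x y ⟨e, he, hends⟩
  exact ⟨Sum.inr e, Set.mem_image_of_mem _ he, by
    rw [vi_ends_inr, hends]; exact Sym2.map_pair_eq _ _ _⟩

lemma reach_proj1 {C : Set (MGraph.vertexIdent G1 G2 u1 u2).E}
    (hC : C ⊆ Set.range Sum.inl) {p q : (MGraph.vertexIdent G1 G2 u1 u2).V}
    (h : (MGraph.vertexIdent G1 G2 u1 u2).ReachOn C p q) :
    ∀ a b : G1.V, p = Sum.inl a → q = Sum.inl b → G1.ReachOn (Sum.inl ⁻¹' C) a b := by
  induction h with
  | refl =>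
    intro a b hp hq
    rw [hp] at hq
    cases Sum.inl_injective hq
    exact Relation.ReflTransGen.refl
  | @tail m q hpm hadj IH =>
    intro a b hp hq
    obtain ⟨x, hx, hends⟩ := hadj
    obtain ⟨e, rfl⟩ := hC hx
    rw [vi_ends_inl] at hends
    have hm : m ∈ (G1.ends e).map Sum.inl := by rw [hends]; exact Sym2.mem_mk_left _ _
    obtain ⟨c, hc, hcm⟩ := Sym2.mem_map.mp hm
    have hinl : Function.Injective
        (Sum.inl : G1.V → (MGraph.vertexIdent G1 G2 u1 u2).V) := Sum.inl_injective
    have := Sym2.map.injective hinl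
      (show Sym2.map Sum.inl (G1.ends e) = Sym2.map Sum.inl s(c, b) by
        rw [Sym2.map_pair_eq, hcm, hends, hq]; rfl)
    exact (IH a c hp hcm.symm).tail ⟨e, hx, this⟩

lemma reach_proj2 {C : Set (MGraph.vertexIdent G1 G2 u1 u2).E}
    (hC : C ⊆ Set.range Sum.inr) {p q : (MGraph.vertexIdent G1 G2 u1 u2).V}
    (h : (MGraph.vertexIdent G1 G2 u1 u2).ReachOn C p q) :
    ∀ a b : G2.V, p = iota2 G1 G2 u1 u2 a → q = iota2 G1 G2 u1 u2 b →
      G2.ReachOn (Sum.inr ⁻¹' C) a b := by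
  induction h with
  | refl =>
    intro a b hp hq
    rw [hp] at hq
    cases iota2_injective hq
    exact Relation.ReflTransGen.refl
  | @tail m q hpm hadj IH =>
    intro a b hp hq
    obtain ⟨x, hx, hends⟩ := hadj
    obtain ⟨e, rfl⟩ := hC hx
    rw [vi_ends_inr] at hends
    have hm : m ∈ (G2.ends e).map (iota2 G1 G2 u1 u2) := by
      rw [hends]; exact Sym2.mem_mk_left _ _
    obtain ⟨c, hc, hcm⟩ := Sym2.mem_map.mp hm
    have := Sym2.map.injective (iota2_injective (G1 := G1) (G2 := G2) (u1 := u1) (u2 := u2))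
      (show Sym2.map (iota2 G1 G2 u1 u2) (G2.ends e) = Sym2.map (iota2 G1 G2 u1 u2) s(c, b) by
        rw [Sym2.map_pair_eq, hcm, hends, hq])
    exact (IH a c hp hcm.symm).tail ⟨e, hx, this⟩

lemma cycle_lift1 {C1 : Set G1.E} (h : G1.IsCycle C1) :
    (MGraph.vertexIdent G1 G2 u1 u2).IsCycle (Sum.inl '' C1) := by
  have hpre1 : Sum.inl ⁻¹' (Sum.inl '' C1 : Set (MGraph.vertexIdent G1 G2 u1 u2).E) = C1 :=
    Set.preimage_image_eq _ Sum.inl_injective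
  have hpre2 : (Sum.inr ⁻¹' (Sum.inl '' C1) : Set G2.E) = ∅ := by
    ext x
    simp only [Set.mem_preimage, Set.mem_image, Set.mem_empty_iff_false, iff_false, not_exists]
    rintro e ⟨_, hEq⟩
    exact nomatch hEq
  obtain ⟨hne, hdeg, hconn⟩ := h
  refine ⟨hne.image _, ?_, ?_⟩
  · intro p
    match p with
    | Sum.inl v =>
      by_cases hv : v = u1
      · erw [hv, degOn_vi_glue, hpre1, hpre2, degOn_empty, add_zero]
        exact hdeg u1
      · rw [degOn_vi_inl _ hv, hpre1]
        exact hdeg v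
    | Sum.inr ⟨w, hw⟩ =>
      erw [degOn_vi_inr _ hw, hpre2, degOn_empty]
      exact Or.inl rfl
  · rintro x hx y hy a b ha hb
    obtain ⟨e, he, rfl⟩ := hx
    obtain ⟨f, hf, rfl⟩ := hy
    rw [vi_ends_inl] at ha hb
    obtain ⟨a0, ha0, rfl⟩ := Sym2.mem_map.mp ha
    obtain ⟨b0, hb0, rfl⟩ := Sym2.mem_map.mp hb
    exact reach_lift1 (hconn e he f hf a0 b0 ha0 hb0)

lemma cycle_lift2 {C2 : Set G2.E} (h : G2.IsCycle C2) :
    (MGraph.vertexIdent G1 G2 u1 u2).IsCycle (Sum.inr '' C2) := by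
  have hpre2 : Sum.inr ⁻¹' (Sum.inr '' C2 : Set (MGraph.vertexIdent G1 G2 u1 u2).E) = C2 :=
    Set.preimage_image_eq _ Sum.inr_injective
  have hpre1 : (Sum.inl ⁻¹' (Sum.inr '' C2) : Set G1.E) = ∅ := by
    ext x
    simp only [Set.mem_preimage, Set.mem_image, Set.mem_empty_iff_false, iff_false, not_exists]
    rintro e ⟨_, hEq⟩
    exact nomatch hEq
  obtain ⟨hne, hdeg, hconn⟩ := h
  refine ⟨hne.image _, ?_, ?_⟩
  · intro p
    match p with
    | Sum.inl v =>
      by_cases hv : v = u1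
      · erw [hv, degOn_vi_glue, hpre1, hpre2, degOn_empty, zero_add]
        exact hdeg u2
      · erw [degOn_vi_inl _ hv, hpre1, degOn_empty]
        exact Or.inl rfl
    | Sum.inr ⟨w, hw⟩ =>
      rw [degOn_vi_inr _ hw, hpre2]
      exact hdeg w
  · rintro x hx y hy a b ha hb
    obtain ⟨e, he, rfl⟩ := hx
    obtain ⟨f, hf, rfl⟩ := hy
    rw [vi_ends_inr] at ha hb
    obtain ⟨a0, ha0, rfl⟩ := Sym2.mem_map.mp ha
    obtain ⟨b0, hb0, rfl⟩ := Sym2.mem_map.mp hb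
    exact reach_lift2 (hconn e he f hf a0 b0 ha0 hb0)

lemma cycle_proj1 {C : Set (MGraph.vertexIdent G1 G2 u1 u2).E}
    (h : (MGraph.vertexIdent G1 G2 u1 u2).IsCycle C) (hC : C ⊆ Set.range Sum.inl) :
    G1.IsCycle (Sum.inl ⁻¹' C) := by
  have hpre2 : (Sum.inr ⁻¹' C : Set G2.E) = ∅ := by
    ext x
    simp only [Set.mem_preimage, Set.mem_empty_iff_false, iff_false]
    intro hx
    obtain ⟨e, hEq⟩ := hC hx
    exact nomatch hEq
  obtain ⟨hne, hdeg, hconn⟩ := h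
  refine ⟨?_, ?_, ?_⟩
  · obtain ⟨x, hx⟩ := hne
    obtain ⟨e, rfl⟩ := hC hx
    exact ⟨e, hx⟩
  · intro v
    by_cases hv : v = u1
    · have := hdeg (Sum.inl u1)
      rw [degOn_vi_glue, hpre2, degOn_empty, add_zero] at this
      rw [hv]; exact this
    · have := hdeg (Sum.inl v)
      rw [degOn_vi_inl _ hv] at this
      exact this
  · intro e he f hf a b ha hb
    have h1 : (Sum.inl a : (MGraph.vertexIdent G1 G2 u1 u2).V) ∈
        (MGraph.vertexIdent G1 G2 u1 u2).ends (Sum.inl e) := by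
      rw [vi_ends_inl]; exact Sym2.mem_map.mpr ⟨a, ha, rfl⟩
    have h2 : (Sum.inl b : (MGraph.vertexIdent G1 G2 u1 u2).V) ∈
        (MGraph.vertexIdent G1 G2 u1 u2).ends (Sum.inl f) := by
      rw [vi_ends_inl]; exact Sym2.mem_map.mpr ⟨b, hb, rfl⟩
    exact reach_proj1 hC (hconn _ he _ hf _ _ h1 h2) a b rfl rfl

lemma cycle_proj2 {C : Set (MGraph.vertexIdent G1 G2 u1 u2).E}
    (h : (MGraph.vertexIdent G1 G2 u1 u2).IsCycle C) (hC : C ⊆ Set.range Sum.inr) :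
    G2.IsCycle (Sum.inr ⁻¹' C) := by
  have hpre1 : (Sum.inl ⁻¹' C : Set G1.E) = ∅ := by
    ext x
    simp only [Set.mem_preimage, Set.mem_empty_iff_false, iff_false]
    intro hx
    obtain ⟨e, hEq⟩ := hC hx
    exact nomatch hEq
  obtain ⟨hne, hdeg, hconn⟩ := h
  refine ⟨?_, ?_, ?_⟩
  · obtain ⟨x, hx⟩ := hne
    obtain ⟨e, rfl⟩ := hC hx
    exact ⟨e, hx⟩
  · intro w
    by_cases hw : w = u2
    · have := hdeg (Sum.inl u1)
      rw [degOn_vi_glue, hpre1, degOn_empty, zero_add] at this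
      rw [hw]; exact this
    · have := hdeg (Sum.inr ⟨w, hw⟩)
      rw [degOn_vi_inr _ hw] at this
      exact this
  · intro e he f hf a b ha hb
    have h1 : iota2 G1 G2 u1 u2 a ∈
        (MGraph.vertexIdent G1 G2 u1 u2).ends (Sum.inr e) := by
      rw [vi_ends_inr]; exact Sym2.mem_map.mpr ⟨a, ha, rfl⟩
    have h2 : iota2 G1 G2 u1 u2 b ∈
        (MGraph.vertexIdent G1 G2 u1 u2).ends (Sum.inr f) := by
      rw [vi_ends_inr]; exact Sym2.mem_map.mpr ⟨b, hb, rfl⟩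
    exact reach_proj2 hC (hconn _ he _ hf _ _ h1 h2) a b rfl rfl

end VI2

end MGraph
namespace MGraph

section VI3

variable {G1 G2 : MGraph} {u1 : G1.V} {u2 : G2.V}

lemma reach_stay_inl {C : Set (MGraph.vertexIdent G1 G2 u1 u2).E}
    (hd2 : G2.degOn (Sum.inr ⁻¹' C) u2 = 0)
    {p q : (MGraph.vertexIdent G1 G2 u1 u2).V}
    (h : (MGraph.vertexIdent G1 G2 u1 u2).ReachOn C p q) :
    (∃ v, p = Sum.inl v) → ∃ v, q = Sum.inl v := by
  haveI := G2.finE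
  induction h with
  | refl => exact id
  | @tail m q hpm hadj IH =>
    intro hp
    obtain ⟨v, rfl⟩ := IH hp
    obtain ⟨x, hx, hends⟩ := hadj
    match x with
    | Sum.inl e =>
      have hq : q ∈ (MGraph.vertexIdent G1 G2 u1 u2).ends (Sum.inl e) := by
        rw [hends]; exact Sym2.mem_mk_right _ _
      rw [vi_ends_inl] at hq
      obtain ⟨b, _, hbq⟩ := Sym2.mem_map.mp hq
      exact ⟨b, hbq.symm⟩
    | Sum.inr g =>
      exfalso
      have hm : (Sum.inl v : (MGraph.vertexIdent G1 G2 u1 u2).V) ∈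
          (MGraph.vertexIdent G1 G2 u1 u2).ends (Sum.inr g) := by
        rw [hends]; exact Sym2.mem_mk_left _ _
      rw [vi_ends_inr] at hm
      obtain ⟨w, hw, hwv⟩ := Sym2.mem_map.mp hm
      have hwu : w = u2 := (iota2_eq_inl.mp hwv).1
      have hne : g ∈ {e : G2.E | e ∈ Sum.inr ⁻¹' C ∧ u2 ∈ G2.ends e} := ⟨hx, hwu ▸ hw⟩
      rw [degOn_def, Set.ncard_eq_zero (Set.toFinite _)] at hd2
      rw [hd2] at hne
      exact hne

lemma reach_stay_iota2 {C : Set (MGraph.vertexIdent G1 G2 u1 u2).E}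
    (hd1 : G1.degOn (Sum.inl ⁻¹' C) u1 = 0)
    {p q : (MGraph.vertexIdent G1 G2 u1 u2).V}
    (h : (MGraph.vertexIdent G1 G2 u1 u2).ReachOn C p q) :
    (∃ w, p = iota2 G1 G2 u1 u2 w) → ∃ w, q = iota2 G1 G2 u1 u2 w := by
  haveI := G1.finE
  induction h with
  | refl => exact id
  | @tail m q hpm hadj IH =>
    intro hp
    obtain ⟨w, rfl⟩ := IH hp
    obtain ⟨x, hx, hends⟩ := hadj
    match x with
    | Sum.inr g =>
      have hq : q ∈ (MGraph.vertexIdent G1 G2 u1 u2).ends (Sum.inr g) := by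
        rw [hends]; exact Sym2.mem_mk_right _ _
      rw [vi_ends_inr] at hq
      obtain ⟨b, _, hbq⟩ := Sym2.mem_map.mp hq
      exact ⟨b, hbq.symm⟩
    | Sum.inl e =>
      exfalso
      have hm : iota2 G1 G2 u1 u2 w ∈
          (MGraph.vertexIdent G1 G2 u1 u2).ends (Sum.inl e) := by
        rw [hends]; exact Sym2.mem_mk_left _ _
      rw [vi_ends_inl] at hm
      obtain ⟨c, hc, hcv⟩ := Sym2.mem_map.mp hm
      have hcu : c = u1 := (iota2_eq_inl.mp hcv.symm).2
      have hne : e ∈ {e : G1.E | e ∈ Sum.inl ⁻¹' C ∧ u1 ∈ G1.ends e} := ⟨hx, hcu ▸ hc⟩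
      rw [degOn_def, Set.ncard_eq_zero (Set.toFinite _)] at hd1
      rw [hd1] at hne
      exact hne

lemma sub_inr_of_pre (C : Set (MGraph.vertexIdent G1 G2 u1 u2).E)
    (h : Sum.inl ⁻¹' C = (∅ : Set G1.E)) : C ⊆ Set.range Sum.inr := by
  intro x hx
  match x with
  | Sum.inl e => exact absurd (show e ∈ Sum.inl ⁻¹' C from hx) (by rw [h]; exact id)
  | Sum.inr e => exact ⟨e, rfl⟩

lemma sub_inl_of_pre (C : Set (MGraph.vertexIdent G1 G2 u1 u2).E)
    (h : Sum.inr ⁻¹' C = (∅ : Set G2.E)) : C ⊆ Set.range Sum.inl := by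
  intro x hx
  match x with
  | Sum.inr e => exact absurd (show e ∈ Sum.inr ⁻¹' C from hx) (by rw [h]; exact id)
  | Sum.inl e => exact ⟨e, rfl⟩

lemma cycle_split {C : Set (MGraph.vertexIdent G1 G2 u1 u2).E}
    (h : (MGraph.vertexIdent G1 G2 u1 u2).IsCycle C) :
    C ⊆ Set.range Sum.inl ∨ C ⊆ Set.range Sum.inr := by
  haveI := G1.finE; haveI := G2.finE
  obtain ⟨hne, hdeg, hconn⟩ := h
  have heven1 : Even (G1.degOn (Sum.inl ⁻¹' C) u1) := by
    refine G1.even_degOn _ u1 (fun v hv => ?_)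
    rw [← degOn_vi_inl C hv]
    rcases hdeg (Sum.inl v) with h0 | h2
    · rw [h0]; exact Even.zero
    · rw [h2]; exact ⟨1, rfl⟩
  have heven2 : Even (G2.degOn (Sum.inr ⁻¹' C) u2) := by
    refine G2.even_degOn _ u2 (fun w hw => ?_)
    rw [← degOn_vi_inr C hw]
    rcases hdeg (Sum.inr ⟨w, hw⟩) with h0 | h2
    · rw [h0]; exact Even.zero
    · rw [h2]; exact ⟨1, rfl⟩
  have hzero : G1.degOn (Sum.inl ⁻¹' C) u1 = 0 ∨ G2.degOn (Sum.inr ⁻¹' C) u2 = 0 := by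
    have hglue := degOn_vi_glue (u1 := u1) (u2 := u2) C
    obtain ⟨k1, hk1⟩ := heven1
    obtain ⟨k2, hk2⟩ := heven2
    rcases hdeg (Sum.inl u1) with h0 | h2
    · rw [h0] at hglue; omega
    · rw [h2] at hglue; omega
  by_cases hC1 : Sum.inl ⁻¹' C = (∅ : Set G1.E)
  · exact Or.inr (sub_inr_of_pre C hC1)
  by_cases hC2 : Sum.inr ⁻¹' C = (∅ : Set G2.E)
  · exact Or.inl (sub_inl_of_pre C hC2)
  exfalso
  obtain ⟨e, he⟩ := Set.nonempty_iff_ne_empty.mpr hC1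
  obtain ⟨g, hg⟩ := Set.nonempty_iff_ne_empty.mpr hC2
  rcases hzero with hd1 | hd2
  · -- everything reachable from the G2 side stays there, contradiction
    obtain ⟨a, b, hab, hne'⟩ := G1.ends_exists e
    have ha0 : ∃ a0, a0 ∈ G1.ends e ∧ a0 ≠ u1 := by
      by_cases hau : a = u1
      · exact ⟨b, by rw [hab]; exact Sym2.mem_mk_right _ _, by rw [← hau]; exact fun h => hne' (hau ▸ h.symm)⟩
      · exact ⟨a, by rw [hab]; exact Sym2.mem_mk_left _ _, hau⟩
    obtain ⟨a0, ha0m, ha0u⟩ := ha0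
    obtain ⟨w, w2, hw2⟩ := G2.ends_exists g
    have hreach := hconn (Sum.inr g) hg (Sum.inl e) he
      (iota2 G1 G2 u1 u2 w) (Sum.inl a0)
      (by rw [vi_ends_inr]; exact Sym2.mem_map.mpr ⟨w, by rw [hw2.1]; exact Sym2.mem_mk_left _ _, rfl⟩)
      (by rw [vi_ends_inl]; exact Sym2.mem_map.mpr ⟨a0, ha0m, rfl⟩)
    obtain ⟨w', hw'⟩ := reach_stay_iota2 hd1 hreach ⟨w, rfl⟩
    exact ha0u (iota2_eq_inl.mp hw'.symm).2
  · -- everything reachable from the G1 side stays there, contradiction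
    obtain ⟨w, w2, hw2, hwne⟩ := G2.ends_exists g
    have hw0 : ∃ w0, w0 ∈ G2.ends g ∧ w0 ≠ u2 := by
      by_cases hwu : w = u2
      · exact ⟨w2, by rw [hw2]; exact Sym2.mem_mk_right _ _, fun h => hwne (by rw [hwu, h])⟩
      · exact ⟨w, by rw [hw2]; exact Sym2.mem_mk_left _ _, hwu⟩
    obtain ⟨w0, hw0m, hw0u⟩ := hw0
    obtain ⟨a, b, hab⟩ := sym2_exists_rep (G1.ends e)
    have hreach := hconn (Sum.inl e) he (Sum.inr g) hg
      (Sum.inl a) (iota2 G1 G2 u1 u2 w0)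
      (by rw [vi_ends_inl]; exact Sym2.mem_map.mpr ⟨a, by rw [hab]; exact Sym2.mem_mk_left _ _, rfl⟩)
      (by rw [vi_ends_inr]; exact Sym2.mem_map.mpr ⟨w0, hw0m, rfl⟩)
    obtain ⟨v', hv'⟩ := reach_stay_inl hd2 hreach ⟨a, rfl⟩
    exact hw0u (iota2_eq_inl.mp hv').1

end VI3

end MGraph
namespace MGraph

section VI4

variable {G1 G2 : MGraph} {u1 : G1.V} {u2 : G2.V}

lemma decomp_combine {D1 : Set (Set G1.E)} {D2 : Set (Set G2.E)}
    (h1 : G1.IsCycleDecomp D1) (h2 : G2.IsCycleDecomp D2) :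
    ∃ D, (MGraph.vertexIdent G1 G2 u1 u2).IsCycleDecomp D ∧
      D.ncard = D1.ncard + D2.ncard := by
  haveI := G1.finE; haveI := G2.finE
  haveI := (MGraph.vertexIdent G1 G2 u1 u2).finE
  refine ⟨(Set.image Sum.inl) '' D1 ∪ (Set.image Sum.inr) '' D2, ⟨?_, ?_⟩, ?_⟩
  · rintro C (⟨C1, hC1, rfl⟩ | ⟨C2, hC2, rfl⟩)
    · exact ⟨cycle_lift1 (h1.1 C1 hC1).1, Set.subset_univ _⟩
    · exact ⟨cycle_lift2 (h2.1 C2 hC2).1, Set.subset_univ _⟩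
  · intro x _
    match x with
    | Sum.inl e =>
      obtain ⟨C1, ⟨hC1D, heC1⟩, huni⟩ := h1.2 e (Set.mem_univ e)
      refine ⟨Sum.inl '' C1, ⟨Or.inl ⟨C1, hC1D, rfl⟩, Set.mem_image_of_mem _ heC1⟩, ?_⟩
      rintro C ⟨(⟨C1', hC1', rfl⟩ | ⟨C2', hC2', rfl⟩), hxC⟩
      · obtain ⟨e', he', hEq⟩ := hxC
        cases Sum.inl_injective hEq
        rw [huni C1' ⟨hC1', he'⟩]
      · obtain ⟨e', _, hEq⟩ := hxC
        exact nomatch hEq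
    | Sum.inr e =>
      obtain ⟨C2, ⟨hC2D, heC2⟩, huni⟩ := h2.2 e (Set.mem_univ e)
      refine ⟨Sum.inr '' C2, ⟨Or.inr ⟨C2, hC2D, rfl⟩, Set.mem_image_of_mem _ heC2⟩, ?_⟩
      rintro C ⟨(⟨C1', hC1', rfl⟩ | ⟨C2', hC2', rfl⟩), hxC⟩
      · obtain ⟨e', _, hEq⟩ := hxC
        exact nomatch hEq
      · obtain ⟨e', he', hEq⟩ := hxC
        cases Sum.inr_injective hEq
        rw [huni C2' ⟨hC2', he'⟩]
  · erw [Set.ncard_union_eq ?dis (Set.toFinite _) (Set.toFinite _),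
      Set.ncard_image_of_injective _ (Set.image_injective.mpr Sum.inl_injective),
      Set.ncard_image_of_injective _ (Set.image_injective.mpr Sum.inr_injective)]
    case dis =>
      rw [Set.disjoint_left]
      rintro S ⟨C1, hC1, rfl⟩ ⟨C2, hC2, hEq⟩
      obtain ⟨e, he⟩ := (h1.1 C1 hC1).1.1
      have : Sum.inl e ∈ Sum.inr '' C2 := hEq ▸ Set.mem_image_of_mem _ he
      obtain ⟨e', _, hEq2⟩ := this
      exact nomatch hEq2

lemma decomp_split {D : Set (Set (MGraph.vertexIdent G1 G2 u1 u2).E)}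
    (h : (MGraph.vertexIdent G1 G2 u1 u2).IsCycleDecomp D) :
    ∃ D1 D2, G1.IsCycleDecomp D1 ∧ G2.IsCycleDecomp D2 ∧
      D.ncard = D1.ncard + D2.ncard := by
  haveI := G1.finE; haveI := G2.finE
  haveI := (MGraph.vertexIdent G1 G2 u1 u2).finE
  set A : Set (Set (MGraph.vertexIdent G1 G2 u1 u2).E) :=
    {C ∈ D | C ⊆ Set.range Sum.inl} with hA
  have hAD : A ⊆ D := fun C hC => hC.1
  have hB : ∀ C ∈ D \ A, C ⊆ Set.range Sum.inr := by
    rintro C ⟨hCD, hCA⟩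
    rcases cycle_split (h.1 C hCD).1 with hl | hr
    · exact absurd ⟨hCD, hl⟩ hCA
    · exact hr
  refine ⟨(Sum.inl ⁻¹' ·) '' A, (Sum.inr ⁻¹' ·) '' (D \ A), ⟨?_, ?_⟩, ⟨?_, ?_⟩, ?_⟩
  · rintro C1 ⟨C, hC, rfl⟩
    exact ⟨cycle_proj1 (h.1 C (hAD hC)).1 hC.2, Set.subset_univ _⟩
  · intro e _
    obtain ⟨C, ⟨hCD, heC⟩, huni⟩ := h.2 (Sum.inl e) (Set.mem_univ _)
    have hCA : C ∈ A := by
      refine ⟨hCD, ?_⟩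
      rcases cycle_split (h.1 C hCD).1 with hl | hr
      · exact hl
      · obtain ⟨e', hEq⟩ := hr heC
        exact nomatch hEq
    refine ⟨Sum.inl ⁻¹' C, ⟨⟨C, hCA, rfl⟩, heC⟩, ?_⟩
    rintro C1' ⟨⟨C'', hC'', rfl⟩, heC''⟩
    rw [huni C'' ⟨hC''.1, heC''⟩]
  · rintro C2 ⟨C, hC, rfl⟩
    exact ⟨cycle_proj2 (h.1 C hC.1).1 (hB C hC), Set.subset_univ _⟩
  · intro e _
    obtain ⟨C, ⟨hCD, heC⟩, huni⟩ := h.2 (Sum.inr e) (Set.mem_univ _)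
    have hCB : C ∈ D \ A := by
      refine ⟨hCD, fun hCA => ?_⟩
      obtain ⟨e', hEq⟩ := hCA.2 heC
      exact nomatch hEq
    refine ⟨Sum.inr ⁻¹' C, ⟨⟨C, hCB, rfl⟩, heC⟩, ?_⟩
    rintro C2' ⟨⟨C'', hC'', rfl⟩, heC''⟩
    rw [huni C'' ⟨hC''.1, heC''⟩]
  · have hAcard : ((Sum.inl ⁻¹' ·) '' A).ncard = A.ncard := by
      refine Set.ncard_image_of_injOn ?_
      intro C hC C' hC' hEq
      have e1 : Sum.inl '' (Sum.inl ⁻¹' C) = C := Set.image_preimage_eq_of_subset hC.2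
      have e2 : Sum.inl '' (Sum.inl ⁻¹' C') = C' := Set.image_preimage_eq_of_subset hC'.2
      rw [← e1, ← e2]
      exact congrArg _ hEq
    have hBcard : ((Sum.inr ⁻¹' ·) '' (D \ A)).ncard = (D \ A).ncard := by
      refine Set.ncard_image_of_injOn ?_
      intro C hC C' hC' hEq
      have e1 : Sum.inr '' (Sum.inr ⁻¹' C) = C := Set.image_preimage_eq_of_subset (hB C hC)
      have e2 : Sum.inr '' (Sum.inr ⁻¹' C') = C' := Set.image_preimage_eq_of_subset (hB C' hC')
      rw [← e1, ← e2]
      exact congrArg _ hEq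
    rw [hAcard, hBcard, add_comm,
      Set.ncard_diff_add_ncard_of_subset hAD (Set.toFinite _)]

end VI4

end MGraph
/-- cycle numbers under vertex-identification. -/
theorem cycle_numbers_vertexIdent (G1 G2 : MGraph)
    (hE1 : G1.IsEulerian) (hE2 : G2.IsEulerian) (u1 : G1.V) (u2 : G2.V) :
    (MGraph.vertexIdent G1 G2 u1 u2).c = G1.c + G2.c ∧
    (MGraph.vertexIdent G1 G2 u1 u2).nu = G1.nu + G2.nu := by
  classical
  set S : Set ℕ := {n | ∃ D, (MGraph.vertexIdent G1 G2 u1 u2).IsCycleDecompOn Set.univ D ∧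
    D.ncard = n} with hS
  set S1 : Set ℕ := {n | ∃ D, G1.IsCycleDecompOn Set.univ D ∧ D.ncard = n} with hS1
  set S2 : Set ℕ := {n | ∃ D, G2.IsCycleDecompOn Set.univ D ∧ D.ncard = n} with hS2
  have hc : (MGraph.vertexIdent G1 G2 u1 u2).c = sInf S := rfl
  have hc1 : G1.c = sInf S1 := rfl
  have hc2 : G2.c = sInf S2 := rfl
  have hn : (MGraph.vertexIdent G1 G2 u1 u2).nu = sSup S := rfl
  have hn1 : G1.nu = sSup S1 := rfl
  have hn2 : G2.nu = sSup S2 := rfl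
  obtain ⟨D1e, hD1e⟩ := G1.euler_decomp hE1
  obtain ⟨D2e, hD2e⟩ := G2.euler_decomp hE2
  have hS1ne : S1.Nonempty := ⟨D1e.ncard, D1e, hD1e, rfl⟩
  have hS2ne : S2.Nonempty := ⟨D2e.ncard, D2e, hD2e, rfl⟩
  have hcomb : ∀ a ∈ S1, ∀ b ∈ S2, a + b ∈ S := by
    rintro a ⟨Da, hDa, rfl⟩ b ⟨Db, hDb, rfl⟩
    obtain ⟨D, hD, hcard⟩ := MGraph.decomp_combine (u1 := u1) (u2 := u2) hDa hDb
    exact ⟨D, hD, hcard⟩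
  have hsplit : ∀ n ∈ S, ∃ a ∈ S1, ∃ b ∈ S2, n = a + b := by
    rintro n ⟨D, hD, rfl⟩
    obtain ⟨Da, Db, hDa, hDb, hcard⟩ := MGraph.decomp_split hD
    exact ⟨Da.ncard, ⟨Da, hDa, rfl⟩, Db.ncard, ⟨Db, hDb, rfl⟩, hcard⟩
  have hSne : S.Nonempty := by
    obtain ⟨a, ha⟩ := hS1ne
    obtain ⟨b, hb⟩ := hS2ne
    exact ⟨a + b, hcomb a ha b hb⟩
  have hbdd : ∀ H : MGraph, BddAbove {n | ∃ D, H.IsCycleDecompOn Set.univ D ∧ D.ncard = n} := by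
    intro H
    haveI := H.finE
    refine ⟨Nat.card (Set H.E), ?_⟩
    rintro n ⟨D, _, rfl⟩
    rw [← Set.ncard_univ]
    exact Set.ncard_le_ncard (Set.subset_univ D) Set.finite_univ
  constructor
  · rw [hc, hc1, hc2]
    apply le_antisymm
    · exact Nat.sInf_le (hcomb _ (Nat.sInf_mem hS1ne) _ (Nat.sInf_mem hS2ne))
    · obtain ⟨a, ha, b, hb, hEq⟩ := hsplit _ (Nat.sInf_mem hSne)
      rw [hEq]
      exact add_le_add (Nat.sInf_le ha) (Nat.sInf_le hb)
  · rw [hn, hn1, hn2]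
    apply le_antisymm
    · obtain ⟨a, ha, b, hb, hEq⟩ := hsplit _ (Nat.sSup_mem hSne (hbdd _))
      rw [hEq]
      exact add_le_add (le_csSup (hbdd G1) ha) (le_csSup (hbdd G2) hb)
    · exact le_csSup (hbdd _)
        (hcomb _ (Nat.sSup_mem hS1ne (hbdd G1)) _ (Nat.sSup_mem hS2ne (hbdd G2)))
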